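/- Let k ≥ 0, let α_1, …, α_{k+1} be pairwise distinct complex numbers, let β_1, …, β_{k+1} be complex numbers, and let γ_1, γ_2 be complex numbers with γ_1 ≠ γ_2. Then Φ_{1,1,k}(α_1,…,α_{k+1}; β_1,…,β_{k+1}; γ_1, γ_2) = [ ∏_{i=1}^{k+1} (α_i − γ_1)(γ_2 − β_i) − ∏_{i=1}^{k+1} (α_i − γ_2)(γ_1 − β_i) ] / (γ_2 − γ_1). (This is the closed-form weighted enumeration of lozenge tilings of a k × 1 × 1 hexagon, Eq. (A.1) of the paper, with signs fixed by the explicit definition of Φ.) -/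

import Mathlib

open Polynomial Finset Sum

/-- Eq. (2.6) of the paper: the explicit formula for the component of the O(1) loop model
ground state corresponding to three series of nested arches of sizes `a`, `b`, `c`. -/
noncomputable def Phi (a b c : ℕ) (α : Fin (b + c) → ℂ) (β : Fin (a + c) → ℂ)
    (γ : Fin (a + b) → ℂ) : ℂ :=
  ∑ I ∈ Finset.powersetCard c (Finset.univ : Finset (Fin (b + c))),
    ((∏ i ∈ Iᶜ, ∏ j, (α i - β j)) * ∏ i ∈ I, ∏ k, (α i - γ k)) /
      ∏ i ∈ I, ∏ j ∈ Iᶜ, (α i - α j)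

lemma prod_neg' {ι : Type*} (s : Finset ι) (g : ι → ℂ) :
    ∏ i ∈ s, (-(g i)) = (-1) ^ s.card * ∏ i ∈ s, g i := by
  rw [show (fun i => -(g i)) = fun i => (-1 : ℂ) * g i from funext fun i => by ring,
    prod_mul_distrib, prod_const]

lemma leadingCoeff_basis {F : Type*} [Field F] {ι : Type*} [DecidableEq ι]
    (s : Finset ι) (v : ι → F) (i : ι) :
    (Lagrange.basis s v i).leadingCoeff = ∏ j ∈ s.erase i, (v i - v j)⁻¹ := by
  rw [Lagrange.basis, leadingCoeff_prod]
  refine Finset.prod_congr rfl fun j hj => ?_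
  rw [Lagrange.basisDivisor]
  simp [leadingCoeff_mul, leadingCoeff_X_sub_C]

lemma residue_sum {F : Type*} [Field F] {ι : Type*} [Fintype ι] [DecidableEq ι]
    (v : ι → F) (hv : Function.Injective v) (f : F[X])
    (hf : f.natDegree + 2 ≤ Fintype.card ι) :
    ∑ i, f.eval (v i) * ∏ j ∈ ({i}ᶜ : Finset ι), (v i - v j)⁻¹ = 0 := by
  have hcard : (Fintype.card ι : ℕ) = (Finset.univ : Finset ι).card := by simp
  have hdeg : f.degree < ((Finset.univ : Finset ι).card : ℕ) := by
    calc f.degree ≤ f.natDegree := degree_le_natDegree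
    _ < ((Finset.univ : Finset ι).card : ℕ) := by
        rw [← hcard]; exact_mod_cast by omega
  have hinterp := Lagrange.eq_interpolate (s := Finset.univ) (v := v) (hv.injOn) hdeg
  have hc : f.coeff (Fintype.card ι - 1) = 0 := by
    apply coeff_eq_zero_of_natDegree_lt; omega
  rw [hinterp, Lagrange.interpolate_apply, Polynomial.finset_sum_coeff] at hc
  have key : ∀ i : ι, (C (f.eval (v i)) * Lagrange.basis Finset.univ v i).coeff
      (Fintype.card ι - 1) = f.eval (v i) * ∏ j ∈ ({i}ᶜ : Finset ι), (v i - v j)⁻¹ := by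
    intro i
    rw [coeff_C_mul]
    congr 1
    have hnd : (Lagrange.basis Finset.univ v i).natDegree = Fintype.card ι - 1 := by
      rw [Lagrange.natDegree_basis hv.injOn (mem_univ i), hcard]
    rw [← hnd, Polynomial.coeff_natDegree, leadingCoeff_basis]
    congr 1
    ext j
    simp [eq_comm]
  rw [Finset.sum_congr rfl fun i _ => key i] at hc
  exact hc

lemma erase_disjSum_inl {ι κ : Type*} [DecidableEq ι] [DecidableEq κ]
    (s : Finset ι) (t : Finset κ) (i : ι) :
    (s.disjSum t).erase (inl i) = (s.erase i).disjSum t := by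
  ext x; cases x <;> simp [mem_erase, and_comm]

lemma erase_disjSum_inr {ι κ : Type*} [DecidableEq ι] [DecidableEq κ]
    (s : Finset ι) (t : Finset κ) (c : κ) :
    (s.disjSum t).erase (inr c) = s.disjSum (t.erase c) := by
  ext x; cases x <;> simp [mem_erase, and_comm]

lemma aux_field (e A E D u w : ℂ) (he : e * e = 1) (hD : D ≠ 0) (hu : u ≠ 0)
    (hw : w ≠ 0) :
    A * E / (e * D) = e * (u * w * E) * (A * (D⁻¹ * (u⁻¹ * w⁻¹))) := by
  have he0 : e ≠ 0 := fun h => by simp [h] at he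
  field_simp
  linear_combination (-(A * E)) * he

lemma key (k : ℕ) (α β : Fin (1 + k) → ℂ) (γ₁ γ₂ : ℂ)
    (hα : Function.Injective α) (hγ : γ₁ ≠ γ₂)
    (h1 : ∀ i, α i ≠ γ₁) (h2 : ∀ i, α i ≠ γ₂) :
    (∑ i0 : Fin (1 + k), (∏ j, (α i0 - β j)) *
        (∏ i ∈ Finset.univ.erase i0, ((α i - γ₁) * (α i - γ₂))) /
        ∏ i ∈ Finset.univ.erase i0, (α i - α i0)) * (γ₂ - γ₁) =
      (∏ i, (α i - γ₁)) * (∏ i, (γ₂ - β i)) -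
        (∏ i, (α i - γ₂)) * (∏ i, (γ₁ - β i)) := by
  classical
  set v : Fin (1 + k) ⊕ Fin 2 → ℂ := Sum.elim α ![γ₁, γ₂] with hv_def
  have hv : Function.Injective v := by
    rintro (i | c) (j | d) h <;> simp only [hv_def, Sum.elim_inl, Sum.elim_inr] at h
    · exact congrArg _ (hα h)
    · exfalso; fin_cases d
      · exact h1 i (by simpa using h)
      · exact h2 i (by simpa using h)
    · exfalso; fin_cases c
      · exact h1 j (by simpa using h.symm)
      · exact h2 j (by simpa using h.symm)
    · congr 1; fin_cases c <;> fin_cases d <;> simp_all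
  set f : ℂ[X] := ∏ j, (X - C (β j)) with hf_def
  have hfd : f.natDegree = 1 + k := by
    rw [hf_def, natDegree_prod _ _ (fun j _ => X_sub_C_ne_zero (β j))]
    simp
  have H := residue_sum v hv f (by rw [hfd]; simp)
  have hev : ∀ x : ℂ, f.eval x = ∏ j, (x - β j) := by
    intro x; rw [hf_def, eval_prod]; simp
  -- compl singleton products
  have hsplit : ∀ z : Fin (1 + k) ⊕ Fin 2, ∀ g : Fin (1 + k) ⊕ Fin 2 → ℂ,
      ∏ w ∈ ({z}ᶜ : Finset (Fin (1 + k) ⊕ Fin 2)), g w =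
      ∏ w ∈ ((Finset.univ : Finset (Fin (1 + k) ⊕ Fin 2)).erase z), g w := by
    intro z g; rw [Finset.compl_singleton]
  -- notation
  set G₁ : ℂ := ∏ i, (α i - γ₁) with hG₁
  set G₂ : ℂ := ∏ i, (α i - γ₂) with hG₂
  have hG₁0 : G₁ ≠ 0 := prod_ne_zero_iff.mpr fun i _ => sub_ne_zero.mpr (h1 i)
  have hG₂0 : G₂ ≠ 0 := prod_ne_zero_iff.mpr fun i _ => sub_ne_zero.mpr (h2 i)
  have hγγ : γ₂ - γ₁ ≠ 0 := sub_ne_zero.mpr hγ.symm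
  -- rewrite H's sum over sum type
  rw [Fintype.sum_sum_type] at H
  -- treat the two γ terms
  have hterm1 : ∀ c : Fin 2, f.eval (v (inr c)) * ∏ w ∈ ({inr c}ᶜ :
      Finset (Fin (1 + k) ⊕ Fin 2)), (v (inr c) - v w)⁻¹ =
      f.eval (![γ₁, γ₂] c) * ((∏ j, (![γ₁, γ₂] c - α j)⁻¹) *
        ∏ d ∈ (Finset.univ : Finset (Fin 2)).erase c, (![γ₁, γ₂] c - ![γ₁, γ₂] d)⁻¹) := by
    intro c
    rw [hsplit, ← Finset.univ_disjSum_univ, erase_disjSum_inr, prod_disjSum]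
    simp [hv_def]
  have hterm0 : ∀ i : Fin (1 + k), f.eval (v (inl i)) * ∏ w ∈ ({inl i}ᶜ :
      Finset (Fin (1 + k) ⊕ Fin 2)), (v (inl i) - v w)⁻¹ =
      f.eval (α i) * ((∏ j ∈ Finset.univ.erase i, (α i - α j)⁻¹) *
        ((α i - γ₁)⁻¹ * (α i - γ₂)⁻¹)) := by
    intro i
    rw [hsplit, ← Finset.univ_disjSum_univ, erase_disjSum_inl, prod_disjSum]
    simp [hv_def, Fin.prod_univ_two]
    exact Or.inl (Or.inl (mul_comm _ _))
  rw [Finset.sum_congr rfl fun i _ => hterm0 i,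
      Finset.sum_congr rfl fun c _ => hterm1 c, Fin.sum_univ_two] at H
  have herase0 : (Finset.univ : Finset (Fin 2)).erase 0 = {1} := by decide
  have herase1 : (Finset.univ : Finset (Fin 2)).erase 1 = {0} := by decide
  simp only [herase0, herase1, Finset.prod_singleton, Matrix.cons_val_zero,
    Matrix.cons_val_one, Matrix.head_cons] at H
  -- step: rewrite each term of the goal sum
  have hstep : ∀ i0 ∈ (Finset.univ : Finset (Fin (1 + k))),
      (∏ j, (α i0 - β j)) *
        (∏ i ∈ Finset.univ.erase i0, ((α i - γ₁) * (α i - γ₂))) /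
        ∏ i ∈ Finset.univ.erase i0, (α i - α i0) =
      ((-1) ^ k * (G₁ * G₂)) * (f.eval (α i0) *
        ((∏ j ∈ Finset.univ.erase i0, (α i0 - α j)⁻¹) *
          ((α i0 - γ₁)⁻¹ * (α i0 - γ₂)⁻¹))) := by
    intro i0 _
    have hD0 : (∏ j ∈ Finset.univ.erase i0, (α i0 - α j)) ≠ 0 :=
      prod_ne_zero_iff.mpr fun j hj =>
        sub_ne_zero.mpr fun h => (Finset.mem_erase.mp hj).1 (hα h.symm)
    have hcard : (Finset.univ.erase i0).card = k := by
      rw [Finset.card_erase_of_mem (mem_univ i0), card_univ, Fintype.card_fin]; omega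
    have hCD : ∏ i ∈ Finset.univ.erase i0, (α i - α i0) =
        (-1) ^ k * ∏ j ∈ Finset.univ.erase i0, (α i0 - α j) := by
      rw [show (fun i => α i - α i0) = fun i => -(α i0 - α i) from funext fun i => by ring,
        prod_neg', hcard]
    have hE : ((α i0 - γ₁) * (α i0 - γ₂)) *
        ∏ i ∈ Finset.univ.erase i0, ((α i - γ₁) * (α i - γ₂)) = G₁ * G₂ := by
      rw [hG₁, hG₂, ← prod_mul_distrib]
      exact Finset.mul_prod_erase _ (fun i => (α i - γ₁) * (α i - γ₂)) (mem_univ i0)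
    have ha1 : α i0 - γ₁ ≠ 0 := sub_ne_zero.mpr (h1 i0)
    have ha2 : α i0 - γ₂ ≠ 0 := sub_ne_zero.mpr (h2 i0)
    have he : ((-1 : ℂ) ^ k) * ((-1 : ℂ) ^ k) = 1 := by
      rw [← mul_pow]; norm_num
    rw [hev, hCD, ← hE, prod_inv_distrib]
    exact aux_field _ _ _ _ _ _ he hD0 ha1 ha2
  rw [Finset.sum_congr rfl hstep, ← Finset.mul_sum]
  have hcardu : (Finset.univ : Finset (Fin (1 + k))).card = 1 + k := by
    rw [card_univ, Fintype.card_fin]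
  have hP1 : ∏ j, (γ₁ - α j) = (-1) ^ (1 + k) * G₁ := by
    rw [show (fun j => γ₁ - α j) = fun j => -(α j - γ₁) from funext fun j => by ring,
      prod_neg', hcardu, hG₁]
  have hP2 : ∏ j, (γ₂ - α j) = (-1) ^ (1 + k) * G₂ := by
    rw [show (fun j => γ₂ - α j) = fun j => -(α j - γ₂) from funext fun j => by ring,
      prod_neg', hcardu, hG₂]
  simp only [prod_inv_distrib] at H ⊢
  rw [hP1, hP2] at H
  have hS := eq_neg_of_add_eq_zero_left H
  rw [hS]
  simp only [hev]
  have hγγ' : γ₁ - γ₂ ≠ 0 := sub_ne_zero.mpr hγ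
  have hpow : ((-1 : ℂ) ^ (1 + k)) = -((-1 : ℂ) ^ k) := by
    rw [pow_add]; ring
  rw [hpow]
  have hee : ((-1 : ℂ) ^ k) = 1 ∨ ((-1 : ℂ) ^ k) = -1 := by
    rcases Nat.even_or_odd k with h | h
    · left; exact h.neg_one_pow
    · right; exact h.neg_one_pow
  rcases hee with he | he <;> rw [he] <;> field_simp <;> ring

lemma keyA (k : ℕ) (α β : Fin (1 + k) → ℂ) (γ₂ : ℂ)
    (hα : Function.Injective α) (h2 : ∀ i, α i ≠ γ₂) (γ₁ : ℂ) :
    (∑ i0 : Fin (1 + k), (∏ j, (α i0 - β j)) *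
        (∏ i ∈ Finset.univ.erase i0, ((α i - γ₁) * (α i - γ₂))) /
        ∏ i ∈ Finset.univ.erase i0, (α i - α i0)) * (γ₂ - γ₁) =
      (∏ i, (α i - γ₁)) * (∏ i, (γ₂ - β i)) -
        (∏ i, (α i - γ₂)) * (∏ i, (γ₁ - β i)) := by
  classical
  set p : ℂ[X] := (∑ i0 : Fin (1 + k),
      C ((∏ j, (α i0 - β j)) / ∏ i ∈ Finset.univ.erase i0, (α i - α i0)) *
        ∏ i ∈ Finset.univ.erase i0, ((C (α i) - X) * C (α i - γ₂))) * (C γ₂ - X)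
    with hp_def
  set q : ℂ[X] := (∏ i, (C (α i) - X)) * C (∏ i, (γ₂ - β i)) -
      C (∏ i, (α i - γ₂)) * ∏ i, (X - C (β i)) with hq_def
  have hpev : ∀ x : ℂ, p.eval x =
      (∑ i0 : Fin (1 + k), (∏ j, (α i0 - β j)) *
        (∏ i ∈ Finset.univ.erase i0, ((α i - x) * (α i - γ₂))) /
        ∏ i ∈ Finset.univ.erase i0, (α i - α i0)) * (γ₂ - x) := by
    intro x
    rw [hp_def]
    simp only [eval_mul, eval_finset_sum, eval_prod, eval_sub, eval_C, eval_X]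
    congr 1
    refine Finset.sum_congr rfl fun i0 _ => ?_
    rw [div_mul_eq_mul_div]
  have hqev : ∀ x : ℂ, q.eval x =
      (∏ i, (α i - x)) * (∏ i, (γ₂ - β i)) -
        (∏ i, (α i - γ₂)) * (∏ i, (x - β i)) := by
    intro x
    rw [hq_def]
    simp only [eval_sub, eval_mul, eval_prod, eval_C, eval_X]
  have hpq : p = q := by
    apply eq_of_infinite_eval_eq
    apply Set.Infinite.mono (s := ((Set.range α ∪ {γ₂})ᶜ : Set ℂ))
    · intro x hx
      simp only [Set.mem_compl_iff, Set.mem_union, Set.mem_range, Set.mem_singleton_iff,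
        not_or, not_exists] at hx
      have h1x : ∀ i, α i ≠ x := fun i h => hx.1 i h
      have hxγ : x ≠ γ₂ := hx.2
      simp only [Set.mem_setOf_eq, hpev, hqev]
      exact key k α β x γ₂ hα hxγ h1x h2
    · exact Set.Infinite.mono (fun x hx => hx)
        (((Set.finite_range α).union (Set.finite_singleton γ₂)).infinite_compl)
  have := congrArg (eval γ₁) hpq
  rw [hpev, hqev] at this
  exact this

lemma keyB (k : ℕ) (α β : Fin (1 + k) → ℂ) (γ₁ γ₂ : ℂ)
    (hα : Function.Injective α) :
    (∑ i0 : Fin (1 + k), (∏ j, (α i0 - β j)) *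
        (∏ i ∈ Finset.univ.erase i0, ((α i - γ₁) * (α i - γ₂))) /
        ∏ i ∈ Finset.univ.erase i0, (α i - α i0)) * (γ₂ - γ₁) =
      (∏ i, (α i - γ₁)) * (∏ i, (γ₂ - β i)) -
        (∏ i, (α i - γ₂)) * (∏ i, (γ₁ - β i)) := by
  classical
  set p : ℂ[X] := (∑ i0 : Fin (1 + k),
      C ((∏ j, (α i0 - β j)) / ∏ i ∈ Finset.univ.erase i0, (α i - α i0)) *
        ∏ i ∈ Finset.univ.erase i0, (C (α i - γ₁) * (C (α i) - X))) * (X - C γ₁)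
    with hp_def
  set q : ℂ[X] := C (∏ i, (α i - γ₁)) * (∏ i, (X - C (β i))) -
      (∏ i, (C (α i) - X)) * C (∏ i, (γ₁ - β i)) with hq_def
  have hpev : ∀ x : ℂ, p.eval x =
      (∑ i0 : Fin (1 + k), (∏ j, (α i0 - β j)) *
        (∏ i ∈ Finset.univ.erase i0, ((α i - γ₁) * (α i - x))) /
        ∏ i ∈ Finset.univ.erase i0, (α i - α i0)) * (x - γ₁) := by
    intro x
    rw [hp_def]
    simp only [eval_mul, eval_finset_sum, eval_prod, eval_sub, eval_C, eval_X]
    congr 1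
    refine Finset.sum_congr rfl fun i0 _ => ?_
    rw [div_mul_eq_mul_div]
  have hqev : ∀ x : ℂ, q.eval x =
      (∏ i, (α i - γ₁)) * (∏ i, (x - β i)) -
        (∏ i, (α i - x)) * (∏ i, (γ₁ - β i)) := by
    intro x
    rw [hq_def]
    simp only [eval_sub, eval_mul, eval_prod, eval_C, eval_X]
  have hpq : p = q := by
    apply eq_of_infinite_eval_eq
    apply Set.Infinite.mono (s := ((Set.range α)ᶜ : Set ℂ))
    · intro x hx
      simp only [Set.mem_compl_iff, Set.mem_range, not_exists] at hx
      simp only [Set.mem_setOf_eq, hpev, hqev]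
      exact keyA k α β x hα (fun i h => hx i h) γ₁
    · exact Set.Infinite.mono (fun x hx => hx) ((Set.finite_range α).infinite_compl)
  have := congrArg (eval γ₂) hpq
  rw [hpev, hqev] at this
  exact this

/-- The closed-form weighted enumeration of lozenge tilings of a `k × 1 × 1` hexagon,
Eq. (A.1) of the paper (with signs fixed by the explicit definition of `Phi`), i.e. the
case `a = b = 1`, `c = k` of `Φ_{a,b,c}` with two `γ`-parameters. -/
theorem Phi_hexagon_k11 (k : ℕ) (α β : Fin (1 + k) → ℂ) (γ₁ γ₂ : ℂ)
    (hα : Function.Injective α) (hγ : γ₁ ≠ γ₂) :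
    Phi 1 1 k α β ![γ₁, γ₂] =
      ((∏ i, (α i - γ₁) * (γ₂ - β i)) - ∏ i, (α i - γ₂) * (γ₁ - β i)) / (γ₂ - γ₁) := by
  classical
  have hγγ : γ₂ - γ₁ ≠ 0 := sub_ne_zero.mpr (Ne.symm hγ)
  have hPhi : Phi 1 1 k α β ![γ₁, γ₂] =
      ∑ i0 : Fin (1 + k), (∏ j, (α i0 - β j)) *
        (∏ i ∈ Finset.univ.erase i0, ((α i - γ₁) * (α i - γ₂))) /
        ∏ i ∈ Finset.univ.erase i0, (α i - α i0) := by
    rw [Phi]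
    have hg2 : ∀ x : ℂ, ∏ c : Fin (1 + 1), (x - ![γ₁, γ₂] c) = (x - γ₁) * (x - γ₂) := by
      intro x
      simp [Fin.prod_univ_succ]
    refine (Finset.sum_bij (fun (i0 : Fin (1 + k)) _ => ({i0}ᶜ : Finset (Fin (1 + k))))
      ?_ ?_ ?_ ?_).symm
    · intro i0 _
      rw [Finset.mem_powersetCard]
      refine ⟨Finset.subset_univ _, ?_⟩
      rw [Finset.card_compl, Finset.card_singleton, Fintype.card_fin]
      omega
    · intro a₁ _ a₂ _ h
      exact Finset.singleton_injective (compl_injective h)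
    · intro I hI
      have hcard : (Iᶜ : Finset (Fin (1 + k))).card = 1 := by
        rw [Finset.card_compl, Fintype.card_fin, (Finset.mem_powersetCard.mp hI).2]
        omega
      obtain ⟨i0, hi0⟩ := Finset.card_eq_one.mp hcard
      exact ⟨i0, Finset.mem_univ _, by rw [← compl_compl I, hi0]⟩
    · intro i0 _
      simp only [compl_compl, Finset.prod_singleton]
      simp only [Finset.compl_singleton, Finset.prod_singleton, hg2]
  rw [eq_div_iff hγγ, hPhi, keyB k α β γ₁ γ₂ hα, ← Finset.prod_mul_distrib,
    ← Finset.prod_mul_distrib]
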